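/- arXiv:1304.5049 — 4 statements merged into one kernel-verified Lean document; each statement's English description precedes it below -/
import Mathlib

section
/- Every 2-connected graph on at least 4 vertices with no C_5-minor contains C_4 as a subgraph. -/
open SimpleGraph

/-- `H` is a minor of `G`: there is a family of nonempty, pairwise disjoint,
connected branch sets in `G`, one for each vertex of `H`, such that adjacent
vertices of `H` have adjacent branch sets. -/
def SimpleGraph.IsMinorOf {W V : Type*} (H : SimpleGraph W) (G : SimpleGraph V) : Prop :=
  ∃ f : W → Set V,
    (∀ w, (f w).Nonempty) ∧
    (∀ w, (G.induce (f w)).Connected) ∧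
    (Pairwise fun w₁ w₂ => Disjoint (f w₁) (f w₂)) ∧
    (∀ ⦃w₁ w₂⦄, H.Adj w₁ w₂ → ∃ v₁ ∈ f w₁, ∃ v₂ ∈ f w₂, G.Adj v₁ v₂)

/-- A graph is 2-connected if it has at least 3 vertices and deleting any
single vertex leaves a connected graph. -/
def SimpleGraph.TwoConnected {V : Type*} [Fintype V] (G : SimpleGraph V) : Prop :=
  3 ≤ Fintype.card V ∧ ∀ v : V, ((⊤ : G.Subgraph).deleteVerts {v}).coe.Connected

section MyAux
variable {V : Type*} {G : SimpleGraph V}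

/-- A cyclically arranged list of `n` distinct vertices with consecutive adjacency. -/
def MyIsCycleFun (G : SimpleGraph V) (n : ℕ) (f : Fin n → V) : Prop :=
  Function.Injective f ∧
    (∀ i : ℕ, (h : i + 1 < n) → G.Adj (f ⟨i, by omega⟩) (f ⟨i + 1, h⟩)) ∧
    (∀ (h : 0 < n), G.Adj (f ⟨n - 1, by omega⟩) (f ⟨0, h⟩))

lemma my_getVert_mem_support {u v : V} (p : G.Walk u v) {i : ℕ} (hi : i ≤ p.length) :
    p.getVert i ∈ p.support :=
  Walk.mem_support_iff_exists_getVert.mpr ⟨i, rfl, hi⟩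

lemma my_getVert_inj {u v : V} : ∀ (p : G.Walk u v), p.IsPath →
    ∀ i j, i ≤ p.length → j ≤ p.length → p.getVert i = p.getVert j → i = j := by
  intro p
  induction p with
  | nil => intro _ i j hi hj _; simp [Walk.length_nil] at hi hj; omega
  | cons h q ih =>
    intro hp i j hi hj hij
    rw [Walk.cons_isPath_iff] at hp
    rw [Walk.length_cons] at hi hj
    match i, j with
    | 0, 0 => rfl
    | 0, (j+1) =>
      exfalso
      apply hp.2
      rw [Walk.getVert_zero, Walk.getVert_cons_succ] at hij
      have : q.getVert j ∈ q.support := my_getVert_mem_support q (by omega)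
      rwa [← hij] at this
    | (i+1), 0 =>
      exfalso
      apply hp.2
      rw [Walk.getVert_zero, Walk.getVert_cons_succ] at hij
      have : q.getVert i ∈ q.support := my_getVert_mem_support q (by omega)
      rwa [hij] at this
    | (i+1), (j+1) =>
      have := ih hp.1 i j (by omega) (by omega)
        (by rwa [Walk.getVert_cons_succ, Walk.getVert_cons_succ] at hij)
      omega

lemma my_exists_first_hit (T : Set V) : ∀ {a b : V} (p : G.Walk a b), b ∈ T →
    ∃ c, c ∈ T ∧ ∃ q : G.Walk a c,
      (∀ x ∈ q.support, x ∈ T → x = c) ∧ ∀ x ∈ q.support, x ∈ p.support := by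
  intro a b p
  induction p with
  | nil =>
    intro hb
    refine ⟨_, hb, Walk.nil, ?_, ?_⟩ <;> simp
  | @cons a c' b h q ih =>
    intro hb
    by_cases haT : a ∈ T
    · exact ⟨a, haT, Walk.nil, by simp, by simp⟩
    · obtain ⟨c, hcT, r, hr1, hr2⟩ := ih hb
      refine ⟨c, hcT, Walk.cons h r, ?_, ?_⟩
      · intro x hx hxT
        rw [Walk.support_cons, List.mem_cons] at hx
        rcases hx with rfl | hx
        · exact absurd hxT haT
        · exact hr1 x hx hxT
      · intro x hx
        rw [Walk.support_cons, List.mem_cons] at hx ⊢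
        rcases hx with rfl | hx
        · exact Or.inl rfl
        · exact Or.inr (hr2 x hx)

lemma my_induce_singleton_connected (v : V) : (G.induce {v}).Connected := by
  have h1 : (G.induce {v}).Preconnected := fun a b => by
    rw [Subsingleton.elim a b]
  haveI : Nonempty ({v} : Set V) := ⟨⟨v, rfl⟩⟩
  exact Connected.mk h1

lemma my_induce_insert_connected {s : Set V} (hs : (G.induce s).Connected) {a b : V}
    (ha : a ∈ s) (hab : G.Adj a b) : (G.induce (insert b s)).Connected := by
  have := connected_induce_union (G := G) hs.preconnected (my_induce_singleton_connected b).preconnected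
    ha (Set.mem_singleton b) hab
  rwa [Set.union_singleton] at this

lemma my_exists_walk_avoid [Fintype V] (h2 : G.TwoConnected) {x y v : V}
    (hx : x ≠ v) (hy : y ≠ v) : ∃ p : G.Walk x y, v ∉ p.support := by
  have hconn := h2.2 v
  have hx' : x ∈ ((⊤ : G.Subgraph).deleteVerts {v}).verts := by simp [hx]
  have hy' : y ∈ ((⊤ : G.Subgraph).deleteVerts {v}).verts := by simp [hy]
  obtain ⟨w⟩ := hconn.preconnected ⟨x, hx'⟩ ⟨y, hy'⟩
  refine ⟨w.map (SimpleGraph.Subgraph.hom _), ?_⟩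
  change v ∉ (w.map (SimpleGraph.Subgraph.hom _)).support
  rw [SimpleGraph.Walk.support_map]
  intro hv
  obtain ⟨z, hz, hzv⟩ := List.mem_map.mp hv
  exact z.prop.2 (by simpa using hzv)

lemma my_exists_not_mem [Fintype V] (s : Finset V) (h : s.card < Fintype.card V) :
    ∃ x, x ∉ s := by
  by_contra h'
  push_neg at h'
  have : s = Finset.univ := Finset.eq_univ_iff_forall.mpr h'
  rw [this, Finset.card_univ] at h
  omega

lemma my_exists_two_neighbors [Fintype V] (h2 : G.TwoConnected) (hcard : 4 ≤ Fintype.card V)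
    (v : V) : ∃ a b, G.Adj v a ∧ G.Adj v b ∧ a ≠ b := by
  classical
  obtain ⟨t, ht⟩ := my_exists_not_mem ({v} : Finset V)
    (lt_of_le_of_lt (Finset.card_singleton v).le (by omega))
  simp only [Finset.mem_singleton] at ht
  obtain ⟨u, hu⟩ := my_exists_not_mem ({v, t} : Finset V)
    (by
      have h1 := Finset.card_insert_le v ({t} : Finset V)
      simp only [Finset.card_singleton] at h1
      omega)
  simp only [Finset.mem_insert, Finset.mem_singleton, not_or] at hu
  obtain ⟨p, hp⟩ := my_exists_walk_avoid h2 (Ne.symm hu.1) (Ne.symm hu.2)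
  have hnn : ¬p.Nil := SimpleGraph.Walk.not_nil_of_ne (fun h => ht h.symm)
  have ha : G.Adj v (p.getVert 1) := SimpleGraph.Walk.adj_snd hnn
  set a := p.getVert 1 with ha_def
  obtain ⟨t', ht'⟩ := my_exists_not_mem ({v, a} : Finset V)
    (by
      have := Finset.card_insert_le v ({a} : Finset V)
      simp only [Finset.card_singleton] at this
      omega)
  simp only [Finset.mem_insert, Finset.mem_singleton, not_or] at ht'
  obtain ⟨q, hq⟩ := my_exists_walk_avoid h2 ha.ne ht'.2
  have hnn2 : ¬q.Nil := SimpleGraph.Walk.not_nil_of_ne (fun h => ht'.1 h.symm)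
  have hb : G.Adj v (q.getVert 1) := SimpleGraph.Walk.adj_snd hnn2
  refine ⟨a, q.getVert 1, ha, hb, fun h => ?_⟩
  apply hq
  rw [h]
  apply my_getVert_mem_support
  have := SimpleGraph.Walk.not_nil_iff_lt_length.mp hnn2
  omega

lemma my_exists_max_path [Fintype V] [Nonempty V] : ∃ (u v : V) (p : G.Walk u v),
    p.IsPath ∧ ∀ (a b : V) (q : G.Walk a b), q.IsPath → q.length ≤ p.length := by
  classical
  let P : ℕ → Prop := fun m => ∃ (a b : V) (q : G.Walk a b), q.IsPath ∧ q.length = m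
  have h0 : P 0 := ⟨Classical.arbitrary V, _, SimpleGraph.Walk.nil,
    SimpleGraph.Walk.IsPath.nil, rfl⟩
  obtain ⟨a, b, q, hq, hlen⟩ :=
    Nat.findGreatest_spec (P := P) (Nat.zero_le (Fintype.card V)) h0
  refine ⟨a, b, q, hq, fun a' b' q' hq' => ?_⟩
  rw [hlen]
  exact Nat.le_findGreatest (le_of_lt hq'.length_lt) ⟨a', b', q', hq', rfl⟩

lemma my_hom_of_cycle4 {f : Fin 4 → V} (h : MyIsCycleFun G 4 f) :
    ∃ g : SimpleGraph.cycleGraph 4 →g G, Function.Injective g := by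
  refine ⟨⟨f, ?_⟩, h.1⟩
  intro a b hab
  fin_cases a <;> fin_cases b <;>
    first
      | exact absurd hab (by decide)
      | exact h.2.1 0 (by norm_num)
      | exact (h.2.1 0 (by norm_num)).symm
      | exact h.2.1 1 (by norm_num)
      | exact (h.2.1 1 (by norm_num)).symm
      | exact h.2.1 2 (by norm_num)
      | exact (h.2.1 2 (by norm_num)).symm
      | exact h.2.2 (by norm_num)
      | exact (h.2.2 (by norm_num)).symm

lemma my_minor_of_long_cycle {n : ℕ} (hn : 5 ≤ n) {f : Fin n → V}
    (hf : MyIsCycleFun G n f) : (SimpleGraph.cycleGraph 5).IsMinorOf G := by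
  have hmem : ∀ (a : ℕ) (ha : a < n) (i : Fin 5), min a 4 = i.val →
      f ⟨a, ha⟩ ∈ f '' {j : Fin n | min j.val 4 = i.val} :=
    fun a ha i h => ⟨⟨a, ha⟩, h, rfl⟩
  refine ⟨fun i => f '' {j : Fin n | min j.val 4 = i.val}, ?_, ?_, ?_, ?_⟩
  · intro i
    exact ⟨f ⟨i.val, by omega⟩, hmem i.val (by omega) i (by omega)⟩
  · intro i
    show (G.induce (f '' {j : Fin n | min j.val 4 = i.val})).Connected
    by_cases hi : i.val < 4
    · have : {j : Fin n | min j.val 4 = i.val} = {⟨i.val, by omega⟩} := by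
        ext j
        simp only [Set.mem_setOf_eq, Set.mem_singleton_iff, Fin.ext_iff]
        omega
      rw [this, Set.image_singleton]
      exact my_induce_singleton_connected _
    · have hi4 : i.val = 4 := by omega
      have key : ∀ k, 4 ≤ k → k < n →
          (G.induce (f '' {j : Fin n | 4 ≤ j.val ∧ j.val ≤ k})).Connected := by
        intro k hk
        induction k, hk using Nat.le_induction with
        | base =>
          intro h4
          have : {j : Fin n | 4 ≤ j.val ∧ j.val ≤ 4} = {⟨4, by omega⟩} := by
            ext j
            simp only [Set.mem_setOf_eq, Set.mem_singleton_iff, Fin.ext_iff]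
            omega
          rw [this, Set.image_singleton]
          exact my_induce_singleton_connected _
        | succ k hk ih =>
          intro hkn
          have hadj : G.Adj (f ⟨k, by omega⟩) (f ⟨k + 1, by omega⟩) := hf.2.1 k (by omega)
          have hset : insert (⟨k + 1, by omega⟩ : Fin n) {j : Fin n | 4 ≤ j.val ∧ j.val ≤ k}
              = {j : Fin n | 4 ≤ j.val ∧ j.val ≤ k + 1} := by
            ext j
            simp only [Set.mem_insert_iff, Set.mem_setOf_eq, Fin.ext_iff]
            omega
          rw [← hset, Set.image_insert_eq]
          exact my_induce_insert_connected (ih (by omega))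
            ⟨⟨k, by omega⟩, show 4 ≤ k ∧ k ≤ k by omega, rfl⟩ hadj
      have := key (n - 1) (by omega) (by omega)
      have hset : {j : Fin n | 4 ≤ j.val ∧ j.val ≤ n - 1} = {j : Fin n | min j.val 4 = i.val} := by
        ext j
        have := j.isLt
        simp only [Set.mem_setOf_eq]
        omega
      rwa [hset] at this
  · intro i1 i2 hne
    rw [Set.disjoint_left]
    rintro x ⟨j1, hj1, rfl⟩ ⟨j2, hj2, hx⟩
    apply hne
    have := hf.1 hx
    subst this
    exact Fin.ext (by rw [← hj1, ← hj2])
  · intro w1 w2 hadj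
    have e0 := hf.2.1 0 (by omega)
    have e1 := hf.2.1 1 (by omega)
    have e2 := hf.2.1 2 (by omega)
    have e3 := hf.2.1 3 (by omega)
    have e4 := hf.2.2 (by omega)
    fin_cases w1 <;> fin_cases w2 <;>
      first
        | exact absurd hadj (by decide)
        | exact ⟨_, hmem 0 (by omega) _ (by decide), _, hmem 1 (by omega) _ (by decide), e0⟩
        | exact ⟨_, hmem 1 (by omega) _ (by decide), _, hmem 0 (by omega) _ (by decide), e0.symm⟩
        | exact ⟨_, hmem 1 (by omega) _ (by decide), _, hmem 2 (by omega) _ (by decide), e1⟩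
        | exact ⟨_, hmem 2 (by omega) _ (by decide), _, hmem 1 (by omega) _ (by decide), e1.symm⟩
        | exact ⟨_, hmem 2 (by omega) _ (by decide), _, hmem 3 (by omega) _ (by decide), e2⟩
        | exact ⟨_, hmem 3 (by omega) _ (by decide), _, hmem 2 (by omega) _ (by decide), e2.symm⟩
        | exact ⟨_, hmem 3 (by omega) _ (by decide), _, hmem 4 (by omega) _ (by decide), e3⟩
        | exact ⟨_, hmem 4 (by omega) _ (by decide), _, hmem 3 (by omega) _ (by decide), e3.symm⟩
        | exact ⟨_, hmem (n - 1) (by omega) _ (by show min (n-1) 4 = 4; omega), _,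
            hmem 0 (by omega) _ (by decide), e4⟩
        | exact ⟨_, hmem 0 (by omega) _ (by decide), _,
            hmem (n - 1) (by omega) _ (by show min (n-1) 4 = 4; omega), e4.symm⟩

lemma my_cycle4 {u v1 x v2 : V} (h1 : G.Adj u v1) (h2 : G.Adj v1 x) (h3 : G.Adj x v2)
    (h4 : G.Adj v2 u) (hne1 : u ≠ x) (hne2 : v1 ≠ v2) :
    MyIsCycleFun G 4 (fun j => if j.val = 0 then u else if j.val = 1 then v1
      else if j.val = 2 then x else v2) := by
  have n1 : u ≠ v1 := h1.ne
  have n2 : v1 ≠ x := h2.ne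
  have n3 : x ≠ v2 := h3.ne
  have n4 : v2 ≠ u := h4.ne
  refine ⟨?_, ?_, ?_⟩
  · intro j1 j2 hj
    fin_cases j1 <;> fin_cases j2 <;> simp_all
  · intro k hk
    have hk3 : k < 3 := by omega
    interval_cases k
    · exact show G.Adj u v1 from h1
    · exact show G.Adj v1 x from h2
    · exact show G.Adj x v2 from h3
  · intro h0
    exact show G.Adj v2 u from h4

open SimpleGraph.Walk in
lemma my_exists_cycle_ge4 [Fintype V] (h2 : G.TwoConnected) (hcard : 4 ≤ Fintype.card V) :
    ∃ n, 4 ≤ n ∧ ∃ f : Fin n → V, MyIsCycleFun G n f := by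
  classical
  haveI : Nonempty V := Fintype.card_pos_iff.mp (by omega)
  obtain ⟨u, vv, p, hp, hmax⟩ := my_exists_max_path (G := G)
  have hclose : ∀ w, G.Adj u w → w ∈ p.support := by
    intro w hw
    by_contra hns
    have hcons : (SimpleGraph.Walk.cons hw.symm p).IsPath := by
      rw [cons_isPath_iff]; exact ⟨hp, hns⟩
    have := hmax _ _ _ hcons
    rw [length_cons] at this
    omega
  obtain ⟨a, b, ha, hb, hab⟩ := my_exists_two_neighbors h2 hcard u
  obtain ⟨ia, hia, hia'⟩ := mem_support_iff_exists_getVert.mp (hclose a ha)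
  obtain ⟨ib, hib, hib'⟩ := mem_support_iff_exists_getVert.mp (hclose b hb)
  have hia0 : ia ≠ 0 := by rintro rfl; rw [getVert_zero] at hia; exact ha.ne hia
  have hib0 : ib ≠ 0 := by rintro rfl; rw [getVert_zero] at hib; exact hb.ne hib
  have hiab : ia ≠ ib := by rintro rfl; exact hab (hia.symm.trans hib)
  have hlen2 : 2 ≤ p.length := by omega
  by_cases hbig : ∃ i, 3 ≤ i ∧ i ≤ p.length ∧ G.Adj u (p.getVert i)
  · obtain ⟨i, hi3, hil, hadj⟩ := hbig
    refine ⟨i + 1, by omega, fun j => p.getVert j.val, ?_, ?_, ?_⟩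
    · intro j1 j2 hj
      have e1 := j1.isLt
      have e2 := j2.isLt
      exact Fin.ext (my_getVert_inj p hp _ _ (by omega) (by omega) hj)
    · intro k hk
      show G.Adj (p.getVert k) (p.getVert (k + 1))
      exact p.adj_getVert_succ (by omega)
    · intro h0
      show G.Adj (p.getVert (i + 1 - 1)) (p.getVert 0)
      rw [getVert_zero, Nat.add_sub_cancel]
      exact hadj.symm
  · push_neg at hbig
    set v1 := p.getVert 1 with hv1
    set v2 := p.getVert 2 with hv2
    have hN : ∀ w, G.Adj u w → w = v1 ∨ w = v2 := by
      intro w hw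
      obtain ⟨i, hi, hil⟩ := mem_support_iff_exists_getVert.mp (hclose w hw)
      have hi0 : i ≠ 0 := by rintro rfl; rw [getVert_zero] at hi; exact hw.ne hi
      have hi3 : i < 3 := by
        by_contra hcon
        exact hbig i (by omega) hil (by rw [hi]; exact hw)
      interval_cases i
      · exact absurd rfl hi0
      · exact Or.inl hi.symm
      · exact Or.inr hi.symm
    have hA1 : G.Adj u v1 := by
      have := p.adj_getVert_succ (show 0 < p.length by omega)
      rwa [getVert_zero] at this
    have hA12 : G.Adj v1 v2 := p.adj_getVert_succ (by omega)
    have hA2 : G.Adj u v2 := by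
      rcases hN a ha with h1 | h1 <;> rcases hN b hb with h2 | h2
      · exact absurd (h1.trans h2.symm) (by exact hab)
      · exact h2 ▸ hb
      · exact h1 ▸ ha
      · exact h1 ▸ ha
    have h01 : u ≠ v1 := hA1.ne
    have h02 : u ≠ v2 := hA2.ne
    have h12 : v1 ≠ v2 := hA12.ne
    obtain ⟨w0, hw0⟩ := my_exists_not_mem ({u, v1, v2} : Finset V) (by
      have c1 := Finset.card_insert_le u ({v1, v2} : Finset V)
      have c2 := Finset.card_insert_le v1 ({v2} : Finset V)
      simp only [Finset.card_singleton] at c2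
      omega)
    simp only [Finset.mem_insert, Finset.mem_singleton, not_or] at hw0
    obtain ⟨hw0u, hw0v1, hw0v2⟩ := hw0
    -- Step 1: find u1 ∉ {u,v1,v2} adjacent to v2
    obtain ⟨W, hW⟩ := my_exists_walk_avoid h2 (x := w0) (y := u) hw0v1 h01
    obtain ⟨c, hcT, q, hqhit, hqsub⟩ := my_exists_first_hit {x | x = u ∨ x = v2} W (Or.inl rfl)
    set q' := q.bypass with hq'def
    have hq'path : q'.IsPath := q.bypass_isPath
    have hq'sub : ∀ x ∈ q'.support, x ∈ q.support := fun x hx => q.support_bypass_subset hx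
    have hcw0 : w0 ≠ c := by rcases hcT with rfl | rfl; exacts [hw0u, hw0v2]
    have hnn : ¬q'.Nil := not_nil_of_ne hcw0
    have hlq' : 1 ≤ q'.length := by have := not_nil_iff_lt_length.mp hnn; omega
    set u1 := q'.getVert (q'.length - 1) with hu1def
    have hu1c : G.Adj u1 c := by
      have h := q'.adj_getVert_succ (show q'.length - 1 < q'.length by omega)
      rwa [show q'.length - 1 + 1 = q'.length by omega, getVert_length] at h
    have hu1mem : u1 ∈ q'.support := my_getVert_mem_support q' (by omega)
    have hu1c' : u1 ≠ c := by
      intro h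
      have := my_getVert_inj q' hq'path (q'.length - 1) q'.length (by omega) le_rfl
        (by rw [getVert_length]; exact h)
      omega
    have hu1T : u1 = u ∨ u1 = v2 → u1 = c := fun h => hqhit u1 (hq'sub _ hu1mem) h
    have hu1v1 : u1 ≠ v1 := by
      intro h
      exact hW (h ▸ (hqsub _ (hq'sub _ hu1mem)))
    have hu1u : u1 ≠ u := fun h => hu1c' (hu1T (Or.inl h))
    have hu1v2 : u1 ≠ v2 := fun h => hu1c' (hu1T (Or.inr h))
    have hcv2 : c = v2 := by
      rcases hcT with rfl | rfl
      · rcases hN u1 hu1c.symm with h | h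
        exacts [absurd h hu1v1, absurd h hu1v2]
      · rfl
    subst hcv2
    -- Step 2: find u2 ∉ {u,v1,v2} adjacent to v1, joined to u1 avoiding the triangle
    obtain ⟨W2, hW2⟩ := my_exists_walk_avoid h2 (x := u1) (y := u) hu1v2 h02
    obtain ⟨c', hcT', q2, hq2hit, hq2sub⟩ :=
      my_exists_first_hit {x | x = u ∨ x = v1} W2 (Or.inl rfl)
    set r := q2.bypass with hrdef
    have hrpath : r.IsPath := q2.bypass_isPath
    have hrsub : ∀ x ∈ r.support, x ∈ q2.support := fun x hx => q2.support_bypass_subset hx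
    have hcu1 : u1 ≠ c' := by rcases hcT' with rfl | rfl; exacts [hu1u, hu1v1]
    have hnn2 : ¬r.Nil := not_nil_of_ne hcu1
    have hlr : 1 ≤ r.length := by have := not_nil_iff_lt_length.mp hnn2; omega
    set u2 := r.getVert (r.length - 1) with hu2def
    have hu2c : G.Adj u2 c' := by
      have h := r.adj_getVert_succ (show r.length - 1 < r.length by omega)
      rwa [show r.length - 1 + 1 = r.length by omega, getVert_length] at h
    have hu2mem : u2 ∈ r.support := my_getVert_mem_support r (by omega)
    have hu2c' : u2 ≠ c' := by
      intro h
      have := my_getVert_inj r hrpath (r.length - 1) r.length (by omega) le_rfl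
        (by rw [getVert_length]; exact h)
      omega
    have hu2T : u2 = u ∨ u2 = v1 → u2 = c' := fun h => hq2hit u2 (hrsub _ hu2mem) h
    have hu2v2 : u2 ≠ v2 := fun h => hW2 (h ▸ (hq2sub _ (hrsub _ hu2mem)))
    have hu2u : u2 ≠ u := fun h => hu2c' (hu2T (Or.inl h))
    have hu2v1 : u2 ≠ v1 := fun h => hu2c' (hu2T (Or.inr h))
    have hcv1 : c' = v1 := by
      rcases hcT' with rfl | rfl
      · rcases hN u2 hu2c.symm with h | h
        exacts [absurd h hu2v1, absurd h hu2v2]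
      · rfl
    subst hcv1
    -- hu2c : G.Adj u2 v1
    by_cases h1122 : u1 = u2
    · -- the 4-cycle u, v1, u1, v2
      have hadj11 : G.Adj u1 v1 := by rw [h1122]; exact hu2c
      exact ⟨4, le_rfl, _, my_cycle4 hA1 hadj11.symm hu1c hA2.symm (Ne.symm hu1u) h12⟩
    · -- the long cycle u1 … u2 v1 v2
      set S := r.takeUntil u2 hu2mem with hSdef
      have hSpath : S.IsPath := hrpath.takeUntil hu2mem
      have hSsub : ∀ x ∈ S.support, x ∈ r.support :=
        fun x hx => r.support_takeUntil_subset hu2mem hx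
      have hv1S : v1 ∉ S.support := by
        intro hmem
        have hspec := r.take_spec hu2mem
        have hnd : r.support.Nodup := hrpath.support_nodup
        rw [← hspec, support_append] at hnd
        apply List.disjoint_of_nodup_append hnd hmem
        have hend : v1 ∈ (r.dropUntil u2 hu2mem).support := end_mem_support _
        rw [mem_support_iff] at hend
        rcases hend with h | h
        · exact absurd h.symm hu2v1
        · exact h
      have hv2S : v2 ∉ S.support := fun hmem => hW2 (hq2sub _ (hrsub _ (hSsub _ hmem)))
      have huS : u ∉ S.support := by
        intro hmem
        exact h01 (hq2hit u (hrsub _ (hSsub _ hmem)) (Or.inl rfl))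
      have hS0 : S.getVert 0 = u1 := S.getVert_zero
      have hnnS : ¬S.Nil := not_nil_of_ne h1122
      have hm1 : 1 ≤ S.length := by have := not_nil_iff_lt_length.mp hnnS; omega
      set m := S.length with hmdef
      have hSm : S.getVert m = u2 := S.getVert_length
      refine ⟨m + 3, by omega,
        fun j => if h : j.val ≤ m then S.getVert j.val else if j.val = m + 1 then v1 else v2,
        ?_, ?_, ?_⟩
      · intro j1 j2 hj
        have e1 := j1.isLt
        have e2 := j2.isLt
        apply Fin.ext
        simp only at hj
        by_cases c1 : j1.val ≤ m <;> by_cases c2 : j2.val ≤ m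
        · rw [dif_pos c1, dif_pos c2] at hj
          exact my_getVert_inj S hSpath _ _ c1 c2 hj
        · rw [dif_pos c1, dif_neg c2] at hj
          exfalso
          by_cases c3 : j2.val = m + 1
          · rw [if_pos c3] at hj
            exact hv1S (hj ▸ my_getVert_mem_support S c1)
          · rw [if_neg c3] at hj
            exact hv2S (hj ▸ my_getVert_mem_support S c1)
        · rw [dif_neg c1, dif_pos c2] at hj
          exfalso
          by_cases c3 : j1.val = m + 1
          · rw [if_pos c3] at hj
            exact hv1S (hj.symm ▸ my_getVert_mem_support S c2)
          · rw [if_neg c3] at hj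
            exact hv2S (hj.symm ▸ my_getVert_mem_support S c2)
        · rw [dif_neg c1, dif_neg c2] at hj
          by_cases c3 : j1.val = m + 1 <;> by_cases c4 : j2.val = m + 1
          · omega
          · rw [if_pos c3, if_neg c4] at hj
            exact absurd hj h12
          · rw [if_neg c3, if_pos c4] at hj
            exact absurd hj.symm h12
          · omega
      · intro k hk
        by_cases ck : k + 1 ≤ m
        · show G.Adj (if h : k ≤ m then S.getVert k else if k = m + 1 then v1 else v2)
            (if h : k + 1 ≤ m then S.getVert (k + 1) else if k + 1 = m + 1 then v1 else v2)
          rw [dif_pos (by omega : k ≤ m), dif_pos ck]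
          exact S.adj_getVert_succ (by omega)
        · by_cases ck2 : k ≤ m
          · have hkm : k = m := by omega
            show G.Adj (if h : k ≤ m then S.getVert k else if k = m + 1 then v1 else v2)
              (if h : k + 1 ≤ m then S.getVert (k + 1) else if k + 1 = m + 1 then v1 else v2)
            rw [dif_pos ck2, dif_neg ck, if_pos (by omega : k + 1 = m + 1), hkm, hSm]
            exact hu2c
          · have hkm : k = m + 1 := by omega
            show G.Adj (if h : k ≤ m then S.getVert k else if k = m + 1 then v1 else v2)
              (if h : k + 1 ≤ m then S.getVert (k + 1) else if k + 1 = m + 1 then v1 else v2)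
            rw [dif_neg ck2, if_pos hkm, dif_neg (by omega : ¬(k + 1 ≤ m)),
              if_neg (by omega : ¬(k + 1 = m + 1))]
            exact hA12
      · intro h0
        show G.Adj
          (if h : m + 3 - 1 ≤ m then S.getVert (m + 3 - 1) else if m + 3 - 1 = m + 1 then v1 else v2)
          (if h : 0 ≤ m then S.getVert 0 else if 0 = m + 1 then v1 else v2)
        rw [dif_neg (by omega : ¬(m + 3 - 1 ≤ m)), if_neg (by omega : ¬(m + 3 - 1 = m + 1)),
          dif_pos (Nat.zero_le m), hS0]
        exact hu1c.symm

end MyAux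

/-- Every 2-connected graph on at least 4 vertices with no $C_5$-minor contains
$C_4$ as a subgraph. -/
theorem stmt_5 {V : Type*} [Fintype V] (G : SimpleGraph V)
    (h2 : G.TwoConnected) (hcard : 4 ≤ Fintype.card V)
    (hm : ¬ (SimpleGraph.cycleGraph 5).IsMinorOf G) :
    ∃ f : SimpleGraph.cycleGraph 4 →g G, Function.Injective f := by
  obtain ⟨n, hn4, f, hf⟩ := my_exists_cycle_ge4 h2 hcard
  rcases Nat.lt_or_ge n 5 with h5 | h5
  · have hn : n = 4 := by omega
    subst hn
    exact my_hom_of_cycle4 hf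
  · exact absurd (my_minor_of_long_cycle h5 hf) hm
end

section
/- A 2-connected graph H is a minor of some fan graph F_n if and only if H consists of a single cycle together with some chords all incident to one common vertex. -/
open SimpleGraph

/-- The fan graph on `m+1` vertices: a path on the vertices `some 0, …, some (m-1)`
plus an apex `none` adjacent to all of them. -/
def fanGraph (m : ℕ) : SimpleGraph (Option (Fin m)) :=
  SimpleGraph.fromRel (fun a b =>
    (a = none ∧ b ≠ none) ∨ (∃ i j : Fin m, a = some i ∧ b = some j ∧ (i : ℕ) + 1 = j))

lemma fan_adj_some {n : ℕ} {i j : Fin n} :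
    (fanGraph n).Adj (some i) (some j) ↔ ((i : ℕ) + 1 = j ∨ (j : ℕ) + 1 = i) := by
  simp only [fanGraph, fromRel_adj, ne_eq, Option.some.injEq]
  constructor
  · rintro ⟨hne, (⟨h, -⟩ | ⟨a, b, rfl, rfl, hab⟩) | (⟨h, -⟩ | ⟨a, b, rfl, rfl, hab⟩)⟩
    · exact absurd h (by simp)
    · exact Or.inl hab
    · exact absurd h (by simp)
    · exact Or.inr hab
  · intro h
    have hne : ¬ i = j := by intro hh; subst hh; omega
    rcases h with h | h
    · exact ⟨hne, Or.inl (Or.inr ⟨i, j, rfl, rfl, h⟩)⟩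
    · exact ⟨hne, Or.inr (Or.inr ⟨j, i, rfl, rfl, h⟩)⟩

lemma fan_adj_none {n : ℕ} {i : Fin n} : (fanGraph n).Adj none (some i) := by
  simp [fanGraph]

/-- index of a vertex of the fan -/
def fanIdx {n : ℕ} (o : Option (Fin n)) : ℕ := o.elim 0 Fin.val

lemma fan_walk_ivt {n : ℕ} {S : Set (Option (Fin n))} (hS : none ∉ S)
    {x y : S} (p : ((fanGraph n).induce S).Walk x y) (k : ℕ)
    (hx : fanIdx x.1 ≤ k) (hy : k ≤ fanIdx y.1) :
    ∃ z ∈ p.support, fanIdx (z : S).1 = k := by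
  induction p with
  | nil => exact ⟨_, by simp, le_antisymm hx hy⟩
  | @cons a c b h q ih =>
    by_cases heq : fanIdx (a : Option (Fin n)) = k
    · exact ⟨a, by simp, heq⟩
    · have hlt : fanIdx (a : Option (Fin n)) < k := lt_of_le_of_ne hx heq
      have hc : fanIdx c.1 ≤ k := by
        have hadj : (fanGraph n).Adj a.1 c.1 := by simpa using h
        obtain ⟨i, hi⟩ : ∃ i, a.1 = some i := by
          rcases h' : (a : Option (Fin n)) with _ | i
          · exact absurd (h' ▸ a.2) hS
          · exact ⟨i, rfl⟩
        obtain ⟨j, hj⟩ : ∃ j, c.1 = some j := by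
          rcases h' : (c : Option (Fin n)) with _ | j
          · exact absurd (h' ▸ c.2) hS
          · exact ⟨j, rfl⟩
        rw [hi, hj] at hadj
        rw [fan_adj_some] at hadj
        have hia : fanIdx a.1 = (i : ℕ) := by rw [hi]; rfl
        have hjc : fanIdx c.1 = (j : ℕ) := by rw [hj]; rfl
        rw [hia] at hlt; rw [hjc]
        omega
      obtain ⟨z, hz, hzk⟩ := ih hc hy
      exact ⟨z, by simp [hz], hzk⟩

lemma not_twoConnected_of_unique_nbr {V : Type*} [Fintype V] (H : SimpleGraph V)
    (x z : V) (hxz : x ≠ z) (hz : ∀ u, H.Adj x u → u = z) (h2 : H.TwoConnected) : False := by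
  classical
  obtain ⟨h3, hc⟩ := h2
  obtain ⟨y, hy⟩ : ∃ y : V, y ∉ ({x, z} : Finset V) := by
    by_contra hcon
    push_neg at hcon
    have : (Finset.univ : Finset V) ⊆ {x, z} := fun v _ => hcon v
    have := Finset.card_le_card this
    simp only [Finset.card_univ] at this
    have := Finset.card_insert_le x ({z} : Finset V)
    simp at this; omega
  simp only [Finset.mem_insert, Finset.mem_singleton, not_or] at hy
  have hxmem : x ∈ ((⊤ : H.Subgraph).deleteVerts {z}).verts := by
    simp [Subgraph.deleteVerts_verts, hxz]
  have hymem : y ∈ ((⊤ : H.Subgraph).deleteVerts {z}).verts := by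
    simp [Subgraph.deleteVerts_verts, hy.2]
  obtain ⟨p⟩ := (hc z).preconnected ⟨x, hxmem⟩ ⟨y, hymem⟩
  cases p with
  | nil => exact hy.1 rfl
  | @cons _ c _ h q =>
    have : H.Adj x c.1 := by
      have := Subgraph.coe_adj_sub _ _ _ h
      simpa using this
    have hc2 : (c : V) ≠ z := by
      have h2 := c.2
      simp only [Subgraph.deleteVerts_verts, Subgraph.verts_top, Set.mem_diff,
        Set.mem_singleton_iff] at h2
      exact h2.2
    exact hc2 (hz _ this)

lemma singleton_induce_connected {V : Type*} (G : SimpleGraph V) (v : V) :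
    (G.induce {v}).Connected := by
  have : Nonempty ({v} : Set V) := ⟨⟨v, rfl⟩⟩
  constructor
  rintro ⟨a, ha⟩ ⟨b, hb⟩
  simp only [Set.mem_singleton_iff] at ha hb
  subst ha; subst hb
  rfl

/-- the vertex map from `Fin m` to the fan on `m` vertices -/
def fanMap (m : ℕ) (hm : 3 ≤ m) : Fin m → Option (Fin (m - 1)) :=
  fun a => if h : (a : ℕ) = 0 then none else some ⟨(a : ℕ) - 1, by omega⟩

lemma fanMap_inj {m : ℕ} (hm : 3 ≤ m) : Function.Injective (fanMap m hm) := by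
  intro a b hab
  unfold fanMap at hab
  by_cases h1 : (a : ℕ) = 0 <;> by_cases h2 : (b : ℕ) = 0
  · exact Fin.ext (by omega)
  · rw [dif_pos h1, dif_neg h2] at hab; exact absurd hab (by simp)
  · rw [dif_neg h1, dif_pos h2] at hab; exact absurd hab (by simp)
  · rw [dif_neg h1, dif_neg h2] at hab
    simp only [Option.some.injEq, Fin.mk.injEq] at hab
    exact Fin.ext (by omega)

lemma sub_val_one {m : ℕ} (hm : 3 ≤ m) (a b : Fin m) (h : ((b - a : Fin m) : ℕ) = 1) :
    ((b : ℕ) = (a : ℕ) + 1) ∨ ((a : ℕ) = m - 1 ∧ (b : ℕ) = 0) := by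
  rw [Fin.sub_def] at h
  simp only at h
  have ha := a.isLt
  have hb := b.isLt
  rcases lt_or_ge ((m - (a : ℕ)) + (b : ℕ)) m with hlt | hge
  · rw [Nat.mod_eq_of_lt hlt] at h
    omega
  · rw [Nat.mod_eq_sub_mod hge, Nat.mod_eq_of_lt (by omega)] at h
    omega

lemma map_adj_fan {m : ℕ} (hm : 3 ≤ m) (G' : SimpleGraph (Fin m))
    (hch : ∀ a b : Fin m, G'.Adj a b →
      (SimpleGraph.cycleGraph m).Adj a b ∨ (a : ℕ) = 0 ∨ (b : ℕ) = 0)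
    {a b : Fin m} (h : G'.Adj a b) :
    (fanGraph (m - 1)).Adj (fanMap m hm a) (fanMap m hm b) := by
  have hne : a ≠ b := h.ne
  by_cases ha : (a : ℕ) = 0
  · have hb : (b : ℕ) ≠ 0 := fun hb => hne (Fin.ext (by omega))
    simp only [fanMap]
    rw [dif_pos ha, dif_neg hb]
    exact fan_adj_none
  · by_cases hb : (b : ℕ) = 0
    · simp only [fanMap]
      rw [dif_neg ha, dif_pos hb]
      exact fan_adj_none.symm
    · rcases hch a b h with hcyc | h0 | h0
      · rw [SimpleGraph.cycleGraph_adj'] at hcyc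
        simp only [fanMap]
        rw [dif_neg ha, dif_neg hb, fan_adj_some]
        simp only
        rcases hcyc with h1 | h1
        · rcases sub_val_one hm b a h1 with h' | h'
          · right; omega
          · omega
        · rcases sub_val_one hm a b h1 with h' | h'
          · left; omega
          · omega
      · exact absurd h0 ha
      · exact absurd h0 hb

lemma backward_minor {V : Type*} [Fintype V] (H : SimpleGraph V) {m : ℕ} (hm : 3 ≤ m)
    (G' : SimpleGraph (Fin m)) (hcyc : SimpleGraph.cycleGraph m ≤ G')
    (hch : ∀ a b : Fin m, G'.Adj a b →
      (SimpleGraph.cycleGraph m).Adj a b ∨ (a : ℕ) = 0 ∨ (b : ℕ) = 0)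
    (iso : H ≃g G') : H.IsMinorOf (fanGraph (m - 1)) := by
  refine ⟨fun w => {fanMap m hm (iso w)}, fun w => ⟨_, rfl⟩, fun w => singleton_induce_connected _ _, ?_, ?_⟩
  · intro w₁ w₂ hne
    simp only [Set.disjoint_singleton]
    intro hcon
    exact hne (iso.injective (fanMap_inj hm hcon))
  · intro w₁ w₂ hadj
    refine ⟨_, rfl, _, rfl, ?_⟩
    exact map_adj_fan hm G' hch (iso.map_adj_iff.mpr hadj)

lemma sub_val_one' {m : ℕ} (hm : 3 ≤ m) (a b : Fin m) (h : (b : ℕ) = (a : ℕ) + 1) :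
    ((b - a : Fin m) : ℕ) = 1 := by
  rw [Fin.sub_def]
  simp only
  have ha := a.isLt
  have hb := b.isLt
  have h2 : (m - (a : ℕ)) + (b : ℕ) = m + 1 := by omega
  rw [h2, Nat.add_mod_left]
  exact Nat.mod_eq_of_lt (by omega)

lemma forward_struct {V : Type*} [Fintype V] (H : SimpleGraph V) (h2 : H.TwoConnected)
    {n : ℕ} (hmin : H.IsMinorOf (fanGraph n)) :
    ∃ m : ℕ, 3 ≤ m ∧ ∃ G' : SimpleGraph (Fin m),
      SimpleGraph.cycleGraph m ≤ G' ∧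
      (∀ a b : Fin m, G'.Adj a b →
        (SimpleGraph.cycleGraph m).Adj a b ∨ (a : ℕ) = 0 ∨ (b : ℕ) = 0) ∧
      Nonempty (H ≃g G') := by
  classical
  obtain ⟨f, hne, hcn, hdisj, hadj⟩ := hmin
  have h3 : 3 ≤ Fintype.card V := h2.1
  set m := Fintype.card V with hmdef
  -- branch sets as finsets of path indices
  let T : V → Finset (Fin n) := fun w => Finset.univ.filter (fun i => some i ∈ f w)
  have hT : ∀ w i, i ∈ T w ↔ some i ∈ f w := by intro w i; simp [T]
  have hTne : ∀ w, none ∉ f w → (T w).Nonempty := by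
    intro w hw
    obtain ⟨v, hv⟩ := hne w
    rcases v with _ | i
    · exact absurd hv hw
    · exact ⟨i, (hT w i).mpr hv⟩
  have hTdisj : ∀ w u, w ≠ u → ∀ i, i ∈ T w → i ∈ T u → False := by
    intro w u hwu i hiw hiu
    exact Set.disjoint_left.mp (hdisj hwu) ((hT w i).mp hiw) ((hT u i).mp hiu)
  -- each apex-free branch set is an interval
  have hINT : ∀ w, none ∉ f w → ∀ i j k : Fin n, i ∈ T w → j ∈ T w →
      (i : ℕ) ≤ (k : ℕ) → (k : ℕ) ≤ (j : ℕ) → k ∈ T w := by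
    intro w hw i j k hi hj hik hkj
    have hi' : (some i : Option (Fin n)) ∈ f w := (hT w i).mp hi
    have hj' : (some j : Option (Fin n)) ∈ f w := (hT w j).mp hj
    obtain ⟨p⟩ := (hcn w).preconnected ⟨some i, hi'⟩ ⟨some j, hj'⟩
    obtain ⟨z, hz, hzk⟩ := fan_walk_ivt hw p (k : ℕ) (by simpa [fanIdx] using hik)
      (by simpa [fanIdx] using hkj)
    rcases h' : (z : Option (Fin n)) with _ | i'
    · exact absurd (h' ▸ z.2) hw
    · rw [h'] at hzk
      have hik' : i' = k := Fin.ext (by simpa [fanIdx] using hzk)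
      refine (hT w k).mpr ?_
      rw [← hik', ← h']
      exact z.2
  -- touching intervals
  have hTOUCH : ∀ w u, w ≠ u → none ∉ f w → none ∉ f u → ∀ i j : Fin n,
      i ∈ T w → j ∈ T u → (i : ℕ) + 1 = (j : ℕ) →
      (∀ i' ∈ T w, i' ≤ i) ∧ (∀ j' ∈ T u, j ≤ j') := by
    intro w u hwu hw hu i j hi hj hij
    constructor
    · intro i' hi'
      by_contra hcon
      push_neg at hcon
      have hcon' : (i : ℕ) < (i' : ℕ) := hcon
      have : j ∈ T w := hINT w hw i i' j hi hi' (by omega) (by omega)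
      exact hTdisj w u hwu j this hj
    · intro j' hj'
      by_contra hcon
      push_neg at hcon
      have hcon' : (j' : ℕ) < (j : ℕ) := hcon
      have : i ∈ T u := hINT u hu j' j i hj' hj (by omega) (by omega)
      exact hTdisj w u hwu i hi this
  -- adjacency gives touching indices
  have hADJT : ∀ w u, none ∉ f w → none ∉ f u → H.Adj w u →
      ∃ i j : Fin n, i ∈ T w ∧ j ∈ T u ∧ ((i : ℕ) + 1 = (j : ℕ) ∨ (j : ℕ) + 1 = (i : ℕ)) := by
    intro w u hw hu h
    obtain ⟨v₁, hv₁, v₂, hv₂, hvadj⟩ := hadj h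
    rcases v₁ with _ | i
    · exact absurd hv₁ hw
    rcases v₂ with _ | j
    · exact absurd hv₂ hu
    rw [fan_adj_some] at hvadj
    exact ⟨i, j, (hT _ _).mpr hv₁, (hT _ _).mpr hv₂, hvadj⟩
  -- some branch set contains the apex
  have hW0 : ∃ w₀, none ∈ f w₀ := by
    by_contra hcon
    push_neg at hcon
    have hVne : (Finset.univ : Finset V).Nonempty := by
      refine Finset.card_pos.mp ?_
      rw [Finset.card_univ]; omega
    obtain ⟨x, -, hxmin⟩ := Finset.exists_min_image Finset.univ
      (fun w => (T w).min' (hTne w (hcon w))) hVne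
    have key : ∀ u, H.Adj x u →
        ((T u).min' (hTne u (hcon u)) : ℕ) = ((T x).max' (hTne x (hcon x)) : ℕ) + 1 := by
      intro u hu
      obtain ⟨i, j, hi, hj, hij⟩ := hADJT x u (hcon x) (hcon u) hu
      rcases hij with hij | hij
      · obtain ⟨hup, hdown⟩ := hTOUCH x u hu.ne (hcon x) (hcon u) i j hi hj hij
        have h1 : (T x).max' (hTne x (hcon x)) = i :=
          le_antisymm (hup _ (Finset.max'_mem _ _)) (Finset.le_max' _ _ hi)
        have h2 : (T u).min' (hTne u (hcon u)) = j :=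
          le_antisymm (Finset.min'_le _ _ hj) (hdown _ (Finset.min'_mem _ _))
        rw [h1, h2]; omega
      · exfalso
        obtain ⟨hup, hdown⟩ := hTOUCH u x hu.ne.symm (hcon u) (hcon x) j i hj hi hij
        have h1 : ((T u).min' (hTne u (hcon u)) : ℕ) ≤ (j : ℕ) := Finset.min'_le _ _ hj
        have h2 : (i : ℕ) ≤ ((T x).min' (hTne x (hcon x)) : ℕ) :=
          hdown _ (Finset.min'_mem _ _)
        have h3 : ((T x).min' (hTne x (hcon x)) : ℕ) ≤ ((T u).min' (hTne u (hcon u)) : ℕ) :=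
          hxmin u (Finset.mem_univ u)
        omega
    by_cases hex : ∃ u, H.Adj x u
    · obtain ⟨z, hz⟩ := hex
      refine not_twoConnected_of_unique_nbr H x z hz.ne ?_ h2
      intro u hu
      have k1 := key u hu
      have k2 := key z hz
      by_contra hne'
      exact hTdisj u z hne' _ (Finset.min'_mem _ _)
        (by rw [show (T u).min' (hTne u (hcon u)) = (T z).min' (hTne z (hcon z)) from
              Fin.ext (by omega)]; exact Finset.min'_mem _ _)
    · push_neg at hex
      have : Nontrivial V := Fintype.one_lt_card_iff_nontrivial.mp (by omega)
      obtain ⟨z, hzx⟩ := exists_ne x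
      exact not_twoConnected_of_unique_nbr H x z (Ne.symm hzx)
        (fun u hu => absurd hu (hex u)) h2
  obtain ⟨w₀, hw₀⟩ := hW0
  have hapex : ∀ w, w ≠ w₀ → none ∉ f w :=
    fun w hw hn => Set.disjoint_left.mp (hdisj hw) hn hw₀
  have hntriv : Nontrivial V := Fintype.one_lt_card_iff_nontrivial.mp (by omega)
  have hn0 : 0 < n := by
    obtain ⟨w, hw⟩ := exists_ne w₀
    obtain ⟨i, _⟩ := hTne w (hapex w hw)
    exact i.pos
  -- min and max of branch sets
  let F : V → Fin n := fun w => if h : (T w).Nonempty then (T w).min' h else ⟨0, hn0⟩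
  let M : V → Fin n := fun w => if h : (T w).Nonempty then (T w).max' h else ⟨0, hn0⟩
  have hF : ∀ w (h : (T w).Nonempty), F w = (T w).min' h := fun w h => dif_pos h
  have hM : ∀ w (h : (T w).Nonempty), M w = (T w).max' h := fun w h => dif_pos h
  have hFmem : ∀ w, w ≠ w₀ → F w ∈ T w := by
    intro w h
    rw [hF w (hTne w (hapex w h))]
    exact Finset.min'_mem _ _
  have hMmem : ∀ w, w ≠ w₀ → M w ∈ T w := by
    intro w h
    rw [hM w (hTne w (hapex w h))]
    exact Finset.max'_mem _ _
  have hFle : ∀ w, w ≠ w₀ → ∀ i ∈ T w, F w ≤ i ∧ i ≤ M w := by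
    intro w h i hi
    rw [hF w (hTne w (hapex w h)), hM w (hTne w (hapex w h))]
    exact ⟨Finset.min'_le _ _ hi, Finset.le_max' _ _ hi⟩
  have hFinj : ∀ w u, w ≠ w₀ → u ≠ w₀ → F w = F u → w = u := by
    intro w u hw hu h
    by_contra hne'
    exact hTdisj w u hne' (F w) (hFmem w hw) (h ▸ hFmem u hu)
  -- adjacency means touching min/max
  have hADJE : ∀ w u, w ≠ w₀ → u ≠ w₀ → H.Adj w u →
      ((M w : ℕ) + 1 = (F u : ℕ) ∨ (M u : ℕ) + 1 = (F w : ℕ)) := by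
    intro w u hw hu h
    obtain ⟨i, j, hi, hj, hij⟩ := hADJT w u (hapex w hw) (hapex u hu) h
    rcases hij with hij | hij
    · left
      obtain ⟨hup, hdown⟩ := hTOUCH w u h.ne (hapex w hw) (hapex u hu) i j hi hj hij
      have h1 : M w = i := le_antisymm (hup _ (hMmem w hw)) (hFle w hw i hi).2
      have h2 : F u = j := le_antisymm (hFle u hu j hj).1 (hdown _ (hFmem u hu))
      rw [h1, h2]; omega
    · right
      obtain ⟨hup, hdown⟩ := hTOUCH u w h.ne.symm (hapex u hu) (hapex w hw) j i hj hi hij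
      have h1 : M u = j := le_antisymm (hup _ (hMmem u hu)) (hFle u hu j hj).2
      have h2 : F w = i := le_antisymm (hFle w hw i hi).1 (hdown _ (hFmem w hw))
      rw [h1, h2]; omega
  -- no branch set strictly between touching ones
  have hNOB : ∀ w u v, w ≠ w₀ → u ≠ w₀ → v ≠ w₀ → (M w : ℕ) + 1 = (F u : ℕ) →
      (F w : ℕ) < (F v : ℕ) → (F v : ℕ) < (F u : ℕ) → False := by
    intro w u v hw hu hv htch h1 h2
    have hvw : v ≠ w := by
      intro h'; subst h'; omega
    have : F v ∈ T w := hINT w (hapex w hw) (F w) (M w) (F v) (hFmem w hw) (hMmem w hw)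
      (by omega) (by omega)
    exact hTdisj v w hvw (F v) (hFmem v hv) this
  -- build the ordering equivalence
  let s : Finset (Fin n) := Finset.image F (Finset.univ.erase w₀)
  have hscard : s.card = m - 1 := by
    rw [Finset.card_image_of_injOn (fun a ha b hb hab =>
      hFinj a b (Finset.ne_of_mem_erase ha) (Finset.ne_of_mem_erase hb) hab),
      Finset.card_erase_of_mem (Finset.mem_univ _), Finset.card_univ]
  let oi := s.orderIsoOfFin hscard
  have hFs : ∀ w, w ≠ w₀ → F w ∈ s :=
    fun w h => Finset.mem_image_of_mem F (Finset.mem_erase.mpr ⟨h, Finset.mem_univ w⟩)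
  have hm1 : m - 1 + 1 = m := by omega
  let e : V → Fin m := fun w =>
    if h : w = w₀ then ⟨0, by omega⟩
    else Fin.cast hm1 (oi.symm ⟨F w, hFs w h⟩).succ
  have he0 : (e w₀ : ℕ) = 0 := by simp only [e, dif_pos rfl]
  have heval : ∀ w (h : w ≠ w₀), (e w : ℕ) = ((oi.symm ⟨F w, hFs w h⟩ : Fin (m - 1)) : ℕ) + 1 := by
    intro w h
    simp only [e, dif_neg h, Fin.coe_cast, Fin.val_succ]
  have hene : ∀ w, w ≠ w₀ → (e w : ℕ) ≠ 0 := by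
    intro w h; rw [heval w h]; omega
  have heinj : Function.Injective e := by
    intro w u h
    by_cases hw : w = w₀ <;> by_cases hu : u = w₀
    · rw [hw, hu]
    · exfalso
      apply hene u hu
      rw [← h, hw, he0]
    · exfalso
      apply hene w hw
      rw [h, hu, he0]
    · have h1 := heval w hw
      have h2 := heval u hu
      have h3 : (e w : ℕ) = (e u : ℕ) := by rw [h]
      have h4 : oi.symm ⟨F w, hFs w hw⟩ = oi.symm ⟨F u, hFs u hu⟩ := Fin.ext (by omega)
      have h5 : (⟨F w, hFs w hw⟩ : s) = ⟨F u, hFs u hu⟩ := oi.symm.injective h4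
      exact hFinj w u hw hu (congrArg Subtype.val h5)
  have hebij : Function.Bijective e :=
    (Fintype.bijective_iff_injective_and_card e).mpr ⟨heinj, by simp [hmdef]⟩
  let eE : V ≃ Fin m := Equiv.ofBijective e hebij
  have heEapp : ∀ w, (eE w : Fin m) = e w := fun _ => rfl
  have heEsymm : ∀ (a : Fin m), e (eE.symm a) = a := fun a => eE.apply_symm_apply a
  have heEsymm_ne : ∀ (a : Fin m), (a : ℕ) ≠ 0 → eE.symm a ≠ w₀ := by
    intro a ha hcon
    apply ha
    rw [← heEsymm a, hcon, he0]
  have heEsymm_w₀ : ∀ (a : Fin m), (a : ℕ) = 0 → eE.symm a = w₀ := by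
    intro a ha
    apply heinj
    rw [heEsymm a]
    exact Fin.ext (by rw [he0, ha])
  -- order transfer
  have hlt : ∀ w u, w ≠ w₀ → u ≠ w₀ → ((e w : ℕ) < (e u : ℕ) ↔ (F w : ℕ) < (F u : ℕ)) := by
    intro w u hw hu
    rw [heval w hw, heval u hu]
    rw [Nat.add_lt_add_iff_right]
    rw [← Fin.lt_def, oi.symm.lt_iff_lt, Subtype.mk_lt_mk, Fin.lt_def]
  -- touching branch sets are consecutive in the ordering
  have hstep : ∀ w u, w ≠ w₀ → u ≠ w₀ → (M w : ℕ) + 1 = (F u : ℕ) →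
      (e w : ℕ) + 1 = (e u : ℕ) := by
    intro w u hw hu htch
    have hFM : (F w : ℕ) ≤ (M w : ℕ) := Fin.le_def.mp (hFle w hw (F w) (hFmem w hw)).2
    have hFwu : (F w : ℕ) < (F u : ℕ) := by omega
    have hewu : (e w : ℕ) < (e u : ℕ) := (hlt w u hw hu).mpr hFwu
    by_contra hcon
    have hcon' : (e w : ℕ) + 1 < (e u : ℕ) := by omega
    have hevw := heval w hw
    have hevu := heval u hu
    set r := oi.symm ⟨F w, hFs w hw⟩ with hrdef
    set r' := oi.symm ⟨F u, hFs u hu⟩ with hr'def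
    have hr' : (r' : ℕ) < m - 1 := r'.isLt
    have hlta : (r : ℕ) + 1 < m - 1 := by omega
    set a : Fin (m - 1) := ⟨(r : ℕ) + 1, hlta⟩ with hadef
    have hra : r < a := by rw [Fin.lt_def]; simp [hadef]
    have har' : a < r' := by rw [Fin.lt_def]; simp [hadef]; omega
    obtain ⟨v, hv, hFv⟩ := Finset.mem_image.mp (by exact (oi a).2)
    have hvw₀ : v ≠ w₀ := (Finset.mem_erase.mp hv).1
    have e1 : (↑(oi r) : Fin n) = F w := by rw [hrdef, OrderIso.apply_symm_apply]
    have e2 : (↑(oi r') : Fin n) = F u := by rw [hr'def, OrderIso.apply_symm_apply]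
    have l1 : (F w : ℕ) < (F v : ℕ) := by
      have := oi.lt_iff_lt.mpr hra
      rw [← Subtype.coe_lt_coe] at this
      rw [e1, ← hFv] at this
      exact Fin.lt_def.mp this
    have l2 : (F v : ℕ) < (F u : ℕ) := by
      have := oi.lt_iff_lt.mpr har'
      rw [← Subtype.coe_lt_coe] at this
      rw [e2, ← hFv] at this
      exact Fin.lt_def.mp this
    exact hNOB w u v hw hu hvw₀ htch l1 l2
  -- adjacency means consecutive in the ordering
  have hADJ2 : ∀ w u, w ≠ w₀ → u ≠ w₀ → H.Adj w u →
      ((e w : ℕ) + 1 = (e u : ℕ) ∨ (e u : ℕ) + 1 = (e w : ℕ)) := by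
    intro w u hw hu h
    rcases hADJE w u hw hu h with h' | h'
    · exact Or.inl (hstep w u hw hu h')
    · exact Or.inr (hstep u w hu hw h')
  -- consecutive in the ordering means adjacent
  have hCROSS : ∀ w u, w ≠ w₀ → u ≠ w₀ → (e w : ℕ) + 1 = (e u : ℕ) → H.Adj w u := by
    intro w u hw hu hconsec
    by_contra hno
    have hkey : ∀ (a b : ↥(((⊤ : H.Subgraph).deleteVerts {w₀}).verts))
        (p : (((⊤ : H.Subgraph).deleteVerts {w₀}).coe).Walk a b),
        (e a.1 : ℕ) ≤ (e w : ℕ) → (e b.1 : ℕ) ≤ (e w : ℕ) := by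
      intro a b p
      induction p with
      | nil => exact id
      | @cons a c b hadj' q ih =>
        intro ha
        apply ih
        have hc_ne : (c : V) ≠ w₀ := by
          have hcm := c.2
          simp only [Subgraph.deleteVerts_verts, Subgraph.verts_top, Set.mem_diff,
            Set.mem_singleton_iff] at hcm
          exact hcm.2
        have ha_ne : (a : V) ≠ w₀ := by
          have ham := a.2
          simp only [Subgraph.deleteVerts_verts, Subgraph.verts_top, Set.mem_diff,
            Set.mem_singleton_iff] at ham
          exact ham.2
        have hHadj : H.Adj a.1 c.1 := by
          simpa using Subgraph.coe_adj_sub _ _ _ hadj'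
        rcases hADJ2 a.1 c.1 ha_ne hc_ne hHadj with h' | h'
        · by_cases hec : (e c.1 : ℕ) = (e w : ℕ) + 1
          · exfalso
            have hc_u : (c : V) = u := heinj (Fin.ext (by omega))
            have ha_w : (a : V) = w := heinj (Fin.ext (by omega))
            exact hno (ha_w ▸ hc_u ▸ hHadj)
          · omega
        · omega
    have hwmem : w ∈ ((⊤ : H.Subgraph).deleteVerts {w₀}).verts := by
      simp [Subgraph.deleteVerts_verts, hw]
    have humem : u ∈ ((⊤ : H.Subgraph).deleteVerts {w₀}).verts := by
      simp [Subgraph.deleteVerts_verts, hu]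
    obtain ⟨p⟩ := (h2.2 w₀).preconnected ⟨w, hwmem⟩ ⟨u, humem⟩
    have h6 : (e u : ℕ) ≤ (e w : ℕ) := hkey _ _ p le_rfl
    omega
  -- the hub is adjacent to both endpoints
  have hend1 : H.Adj w₀ (eE.symm ⟨1, by omega⟩) := by
    set u := eE.symm ⟨1, by omega⟩ with hudef
    have heu : (e u : ℕ) = 1 := by rw [hudef, heEsymm]
    have hu_ne : u ≠ w₀ := fun h' => by rw [h'] at heu; omega
    by_contra hno
    set z := eE.symm ⟨2, by omega⟩ with hzdef
    have hez : (e z : ℕ) = 2 := by rw [hzdef, heEsymm]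
    have huz : u ≠ z := fun h' => by rw [h'] at heu; omega
    refine not_twoConnected_of_unique_nbr H u z huz ?_ h2
    intro c hc
    have hc_ne : c ≠ w₀ := fun h' => hno (by rw [← h']; exact hc.symm)
    rcases hADJ2 u c hu_ne hc_ne hc with h' | h'
    · exact heinj (Fin.ext (by omega))
    · exfalso
      exact hc_ne (heinj (Fin.ext (by omega)))
  have hend2 : H.Adj w₀ (eE.symm ⟨m - 1, by omega⟩) := by
    set u := eE.symm ⟨m - 1, by omega⟩ with hudef
    have heu : (e u : ℕ) = m - 1 := by rw [hudef, heEsymm]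
    have hu_ne : u ≠ w₀ := fun h' => by rw [h'] at heu; omega
    by_contra hno
    set z := eE.symm ⟨m - 2, by omega⟩ with hzdef
    have hez : (e z : ℕ) = m - 2 := by rw [hzdef, heEsymm]
    have huz : u ≠ z := fun h' => by rw [h'] at heu; omega
    refine not_twoConnected_of_unique_nbr H u z huz ?_ h2
    intro c hc
    have hc_ne : c ≠ w₀ := fun h' => hno (by rw [← h']; exact hc.symm)
    rcases hADJ2 u c hu_ne hc_ne hc with h' | h'
    · exfalso
      have := (e c).isLt
      omega
    · exact heinj (Fin.ext (by omega))
  -- assemble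
  refine ⟨m, h3, H.comap ⇑eE.symm, ?_, ?_, ⟨⟨eE, ?_⟩⟩⟩
  · intro a b hab
    rw [SimpleGraph.cycleGraph_adj'] at hab
    simp only [comap_adj]
    have hcase : ∀ a b : Fin m, ((b - a : Fin m) : ℕ) = 1 → H.Adj (eE.symm a) (eE.symm b) := by
      intro a b h1
      rcases sub_val_one h3 a b h1 with h' | h'
      · by_cases ha0 : (a : ℕ) = 0
        · rw [heEsymm_w₀ a ha0]
          have hb : b = ⟨1, by omega⟩ := Fin.ext (show (b : ℕ) = 1 by omega)
          rw [hb]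
          exact hend1
        · have hb0 : (b : ℕ) ≠ 0 := by omega
          apply hCROSS _ _ (heEsymm_ne a ha0) (heEsymm_ne b hb0)
          rw [heEsymm, heEsymm]
          omega
      · rw [heEsymm_w₀ b h'.2]
        have haa : a = ⟨m - 1, by omega⟩ := Fin.ext (show (a : ℕ) = m - 1 by omega)
        rw [haa]
        exact hend2.symm
    rcases hab with h1 | h1
    · exact (hcase b a h1).symm
    · exact hcase a b h1
  · intro a b hab
    simp only [comap_adj] at hab
    by_cases ha0 : (a : ℕ) = 0
    · exact Or.inr (Or.inl ha0)
    by_cases hb0 : (b : ℕ) = 0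
    · exact Or.inr (Or.inr hb0)
    left
    rw [SimpleGraph.cycleGraph_adj']
    rcases hADJ2 _ _ (heEsymm_ne a ha0) (heEsymm_ne b hb0) hab with h' | h'
    · rw [heEsymm, heEsymm] at h'
      exact Or.inr (sub_val_one' h3 a b (by omega))
    · rw [heEsymm, heEsymm] at h'
      exact Or.inl (sub_val_one' h3 b a (by omega))
  · intro a b
    simp only [comap_adj, Equiv.symm_apply_apply]

/-- A 2-connected graph is a minor of some fan graph iff it consists of a single
cycle together with some chords all incident to one common vertex. -/
theorem stmt_7 {V : Type*} [Fintype V] (H : SimpleGraph V) (h2 : H.TwoConnected) :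
    (∃ n : ℕ, H.IsMinorOf (fanGraph n)) ↔
      ∃ m : ℕ, 3 ≤ m ∧ ∃ G' : SimpleGraph (Fin m),
        SimpleGraph.cycleGraph m ≤ G' ∧
        (∀ a b : Fin m, G'.Adj a b → (SimpleGraph.cycleGraph m).Adj a b ∨ (a : ℕ) = 0 ∨ (b : ℕ) = 0) ∧
        Nonempty (H ≃g G') := by
  constructor
  · rintro ⟨n, hmin⟩
    exact forward_struct H h2 hmin
  · rintro ⟨m, hm, G', hcyc, hch, ⟨iso⟩⟩
    exact ⟨m - 1, backward_minor H hm G' hcyc hch iso⟩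
end

section
/- Fix ε ∈ (0,1) and set s = s(n) = ⌈(1−ε) log n / log log log n⌉ and r = r(n) = ⌈2 log s / (ε log log s)⌉. Then as n → ∞, the quantity log n − s log r − (s/r) log(s/r) tends to infinity. -/
open Filter Real

private lemma log_le_two_sqrt {x : ℝ} (hx : 0 < x) : Real.log x ≤ 2 * Real.sqrt x := by
  have h1 : Real.log (Real.sqrt x) = Real.log x / 2 := Real.log_sqrt hx.le
  have h2 : Real.log (Real.sqrt x) ≤ Real.sqrt x - 1 :=
    Real.log_le_sub_one_of_pos (Real.sqrt_pos.mpr hx)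
  linarith

private lemma tendsto_sqrt_atTop : Tendsto Real.sqrt atTop atTop := by
  apply tendsto_atTop_atTop.mpr
  intro b
  refine ⟨(max 0 b) ^ 2, fun a ha => ?_⟩
  have : Real.sqrt ((max 0 b) ^ 2) ≤ Real.sqrt a := Real.sqrt_le_sqrt ha
  rw [Real.sqrt_sq (le_max_left 0 b)] at this
  exact le_trans (le_max_right 0 b) this

set_option maxHeartbeats 1000000 in
/-- With `s = ⌈(1-ε) log n / log log log n⌉` and `r = ⌈2 log s / (ε log log s)⌉`,
the quantity `log n - s log r - (s/r) log (s/r)` tends to infinity as `n → ∞`. -/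
theorem stmt_15 (ε : ℝ) (hε : ε ∈ Set.Ioo (0 : ℝ) 1) (s r : ℕ → ℕ)
    (hs : ∀ n : ℕ, s n = ⌈(1 - ε) * Real.log n / Real.log (Real.log (Real.log n))⌉₊)
    (hr : ∀ n : ℕ, r n = ⌈2 * Real.log (s n) / (ε * Real.log (Real.log (s n)))⌉₊) :
    Tendsto (fun n : ℕ =>
        Real.log n - (s n : ℝ) * Real.log (r n)
          - ((s n : ℝ) / (r n : ℝ)) * Real.log ((s n : ℝ) / (r n : ℝ)))
      atTop atTop := by
  obtain ⟨hε0, hε1⟩ := hε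
  set c : ℝ := ε * (1 + ε) / 2 with hc_def
  have hc0 : 0 < c := by positivity
  have hcast : Tendsto (fun n : ℕ => (n : ℝ)) atTop atTop := tendsto_natCast_atTop_atTop
  have hLt : Tendsto (fun n : ℕ => Real.log n) atTop atTop :=
    Real.tendsto_log_atTop.comp hcast
  have hLLt : Tendsto (fun n : ℕ => Real.log (Real.log n)) atTop atTop :=
    Real.tendsto_log_atTop.comp hLt
  have hLLLt : Tendsto (fun n : ℕ => Real.log (Real.log (Real.log n))) atTop atTop :=
    Real.tendsto_log_atTop.comp hLLt
  have hsqt : Tendsto (fun n : ℕ => Real.sqrt (Real.log n)) atTop atTop :=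
    _root_.tendsto_sqrt_atTop.comp hLt
  -- s n tends to infinity
  have hslim : Tendsto (fun n : ℕ => (s n : ℝ)) atTop atTop := by
    apply tendsto_atTop_mono' atTop ?_ (hsqt.const_mul_atTop (show (0:ℝ) < (1-ε)/2 by linarith))
    filter_upwards [hLt.eventually_ge_atTop 2, hLLt.eventually_ge_atTop 2,
      hLLLt.eventually_ge_atTop 2] with n hL hLL hLLL
    set L := Real.log n
    set LL := Real.log L
    set LLL := Real.log LL
    have hL0 : (0:ℝ) < L := by linarith
    have hsq0 : 0 < Real.sqrt L := Real.sqrt_pos.mpr hL0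
    have hLLsq : LL ≤ 2 * Real.sqrt L := log_le_two_sqrt hL0
    have hLLLle : LLL ≤ LL := by
      have := Real.log_le_sub_one_of_pos (show (0:ℝ) < LL by linarith)
      linarith
    have hσ : (1 - ε) * L / (2 * Real.sqrt L) ≤ (1 - ε) * L / LLL := by
      gcongr <;> nlinarith
    have heq : (1 - ε) * L / (2 * Real.sqrt L) = (1 - ε) / 2 * Real.sqrt L := by
      rw [show (1 - ε) * L / (2 * Real.sqrt L) = (1 - ε) / 2 * (L / Real.sqrt L) by ring,
        Real.div_sqrt]
    have hceil : (1 - ε) * L / LLL ≤ (s n : ℝ) := by rw [hs n]; exact Nat.le_ceil _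
    calc (1 - ε) / 2 * Real.sqrt L = (1 - ε) * L / (2 * Real.sqrt L) := heq.symm
      _ ≤ (1 - ε) * L / LLL := hσ
      _ ≤ (s n : ℝ) := hceil
  have hlst : Tendsto (fun n : ℕ => Real.log (s n)) atTop atTop :=
    Real.tendsto_log_atTop.comp hslim
  have hllst : Tendsto (fun n : ℕ => Real.log (Real.log (s n))) atTop atTop :=
    Real.tendsto_log_atTop.comp hlst
  -- main comparison
  apply tendsto_atTop_mono' atTop ?_ (hLt.const_mul_atTop (half_pos hc0))
  filter_upwards [hLt.eventually_ge_atTop 2, hLLt.eventually_ge_atTop 2,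
    hLLLt.eventually_ge_atTop 2, hsqt.eventually_ge_atTop (8 / c),
    hlst.eventually_ge_atTop 2, hllst.eventually_ge_atTop (4 / ε)] with n hL hLL hLLL hsq hls hlls
  set L := Real.log n with hL_def
  set LL := Real.log L
  set LLL := Real.log LL
  set S := (s n : ℝ) with hS_def
  set R := (r n : ℝ) with hR_def
  have hL0 : (0:ℝ) < L := by linarith
  have hLLL0 : (0:ℝ) < LLL := by linarith
  set σ : ℝ := (1 - ε) * L / LLL with hσ_def
  have hσ0 : 0 ≤ σ := div_nonneg (by nlinarith) hLLL0.le
  have hsl : σ ≤ S := by rw [hS_def, hs n]; exact Nat.le_ceil _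
  have hsu : S ≤ σ + 1 := by
    rw [hS_def, hs n]; exact (Nat.ceil_lt_add_one hσ0).le
  have hsn0 : s n ≠ 0 := by
    intro h0
    rw [hS_def, h0] at hls
    norm_num at hls
  have hS1 : (1:ℝ) ≤ S := by
    rw [hS_def]
    exact_mod_cast Nat.one_le_iff_ne_zero.mpr hsn0
  have hS0 : (0:ℝ) < S := by linarith
  have hσLLL : σ * LLL = (1 - ε) * L := div_mul_cancel₀ _ hLLL0.ne'
  -- S ≤ L
  have hSL : S ≤ L := by
    have h1 : σ ≤ L / LLL := (le_div_iff₀ hLLL0).mpr (by nlinarith)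
    have h2 : L / LLL ≤ L / 2 := by gcongr <;> linarith
    linarith
  have hlogS_le : Real.log S ≤ LL := Real.log_le_log hS0 hSL
  have hllogS_le : Real.log (Real.log S) ≤ LLL :=
    Real.log_le_log (by linarith : (0:ℝ) < Real.log S) hlogS_le
  have hllS0 : (0:ℝ) < Real.log (Real.log S) := by
    have : (0:ℝ) < 4 / ε := by positivity
    rw [hS_def]; rw [hS_def] at hlls; linarith
  -- bounds on r
  set ρ : ℝ := 2 * Real.log S / (ε * Real.log (Real.log S)) with hρ_def
  have hρ0 : 0 < ρ := by
    apply div_pos (by linarith) (by positivity)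
  have hrl : ρ ≤ R := by rw [hR_def, hr n]; exact Nat.le_ceil _
  have hru : R ≤ ρ + 1 := by
    rw [hR_def, hr n]; exact (Nat.ceil_lt_add_one hρ0.le).le
  have hR1 : (1:ℝ) ≤ R := by
    rw [hR_def, hr n]
    exact Nat.one_le_cast.mpr (Nat.ceil_pos.mpr hρ0)
  have hR0 : (0:ℝ) < R := by linarith
  have h4 : 4 ≤ ε * Real.log (Real.log S) := by
    have := (div_le_iff₀ hε0).mp hlls
    nlinarith
  have hρ_le : ρ ≤ Real.log S / 2 := by
    have h5 : ρ ≤ 2 * Real.log S / 4 := by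
      rw [hρ_def]; gcongr <;> linarith
    linarith
  have hR_le_logS : R ≤ Real.log S := by linarith
  have hlogR_le : Real.log R ≤ LLL :=
    (Real.log_le_log hR0 hR_le_logS).trans hllogS_le
  have hlogR0 : 0 ≤ Real.log R := Real.log_nonneg hR1
  -- second term bound
  have hterm2 : S * Real.log R ≤ (1 - ε) * L + LLL := by
    have : S * Real.log R ≤ (σ + 1) * LLL :=
      mul_le_mul hsu hlogR_le hlogR0 (by linarith)
    nlinarith
  -- third term bound
  have hterm3 : S / R * Real.log (S / R) ≤ ε / 2 * ((1 - ε) * L + LLL) := by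
    have hstep : S / R * Real.log (S / R) ≤ ε / 2 * (S * Real.log (Real.log S)) := by
      rcases le_or_gt (S / R) 1 with h | h
      · have hle0 : Real.log (S / R) ≤ 0 := Real.log_nonpos (by positivity) h
        have h1 : S / R * Real.log (S / R) ≤ 0 :=
          mul_nonpos_of_nonneg_of_nonpos (by positivity) hle0
        nlinarith
      · have hSR_le_S : S / R ≤ S := div_le_self hS0.le hR1
        have hlogSR_le : Real.log (S / R) ≤ Real.log S :=
          Real.log_le_log (by linarith) hSR_le_S
        have hlogSR0 : 0 ≤ Real.log (S / R) := Real.log_nonneg h.le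
        have hSRρ : S / R ≤ S / ρ := by gcongr
        have h1 : S / R * Real.log (S / R) ≤ S / ρ * Real.log S :=
          mul_le_mul hSRρ hlogSR_le hlogSR0 (by positivity)
        have h2 : S / ρ * Real.log S = ε / 2 * (S * Real.log (Real.log S)) := by
          rw [hρ_def]
          have hlogS0 : Real.log S ≠ 0 := by linarith
          field_simp
        linarith
    have hstep2 : ε / 2 * (S * Real.log (Real.log S)) ≤ ε / 2 * ((σ + 1) * LLL) := by
      have : S * Real.log (Real.log S) ≤ (σ + 1) * LLL :=
        mul_le_mul hsu hllogS_le hllS0.le (by linarith)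
      nlinarith
    have heq1 : (σ + 1) * LLL = (1 - ε) * L + LLL := by nlinarith
    rw [heq1] at hstep2
    linarith
  -- conclude
  have hmulL : Real.sqrt L * Real.sqrt L = L := Real.mul_self_sqrt hL0.le
  have hLLsq : LL ≤ 2 * Real.sqrt L := log_le_two_sqrt hL0
  have hLLLle : LLL ≤ LL := by
    have := Real.log_le_sub_one_of_pos (show (0:ℝ) < LL by linarith)
    linarith
  have hsq0 : 0 < Real.sqrt L := Real.sqrt_pos.mpr hL0
  have hLLL_small : (1 + ε / 2) * LLL ≤ c / 2 * L := by
    have h1 : (1 + ε / 2) * LLL ≤ 4 * Real.sqrt L := by nlinarith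
    have h8 : 8 ≤ c * Real.sqrt L := by
      rw [div_le_iff₀ hc0] at hsq; linarith
    have h9 := mul_le_mul_of_nonneg_right h8 hsq0.le
    rw [mul_assoc, hmulL] at h9
    linarith
  have hcL : c * L = L - (1 - ε) * L - ε / 2 * ((1 - ε) * L) := by
    rw [hc_def]; ring
  nlinarith [hterm2, hterm3, hLLL_small]
end

section
/- The graph F constructed as follows has no cycle of length 2ℓ+1 or greater: take a star with center v_1 and s leaves; partition the leaves into groups, pick a center in each group, iteratively for ℓ−2 rounds subpartition each group and pick new centers, joining each center to the centers of its subgroups, and finally joining the last-level centers to their remaining group members. Equivalently, adding to a star at v_1 a forest on the leaves in which every path has length at most 2(ℓ−1) yields a graph whose longest cycle has length at most 2ℓ. -/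
open SimpleGraph

/-- The star with center `none` and leaf set `W`. -/
def starGraph (W : Type*) : SimpleGraph (Option W) :=
  SimpleGraph.fromRel (fun a _ => a = none)

/-- From a connected induced subgraph, extract a path in the ambient graph
staying inside the set. -/
lemma aux_path_in_set {V : Type*} {G : SimpleGraph V} {s : Set V}
    (h : (G.induce s).Connected) {a b : V} (ha : a ∈ s) (hb : b ∈ s) :
    ∃ p : G.Walk a b, p.IsPath ∧ ∀ x ∈ p.support, x ∈ s := by
  classical
  obtain ⟨q⟩ := h ⟨a, ha⟩ ⟨b, hb⟩
  refine ⟨(q.toPath.val).map (Embedding.induce s).toHom,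
    Walk.map_isPath_of_injective Subtype.val_injective q.toPath.2, ?_⟩
  intro x hx
  change x ∈ (Walk.map (Embedding.induce s).toHom q.toPath.val).support at hx
  rw [Walk.support_map] at hx
  obtain ⟨⟨y, hy⟩, -, rfl⟩ := List.mem_map.mp hx
  exact hy

/-- A chain of `k` disjoint connected sets, consecutive ones joined by an
edge, contains a path of length at least `k - 1`. -/
lemma aux_chain_path {V : Type*} {G : SimpleGraph V} :
    ∀ (k : ℕ) (S : ℕ → Set V),
      (∀ i < k, (G.induce (S i)).Connected) →
      (∀ i j, i < k → j < k → i ≠ j → Disjoint (S i) (S j)) →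
      (∀ i, i + 1 < k → ∃ a ∈ S i, ∃ b ∈ S (i + 1), G.Adj a b) →
      ∀ a ∈ S 0, 0 < k →
      ∃ v, ∃ p : G.Walk a v, p.IsPath ∧ k - 1 ≤ p.length ∧
        ∀ x ∈ p.support, ∃ i < k, x ∈ S i := by
  intro k
  induction k with
  | zero => omega
  | succ k ih =>
    intro S hconn hdisj hedge a ha _
    rcases Nat.eq_zero_or_pos k with rfl | hk
    · exact ⟨a, Walk.nil, Walk.IsPath.nil, by simp, by
        intro x hx
        simp only [Walk.support_nil, List.mem_singleton] at hx
        exact ⟨0, Nat.zero_lt_one, hx ▸ ha⟩⟩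
    · obtain ⟨b, hb, a', ha', hadj⟩ := hedge 0 (by omega)
      obtain ⟨p₀, hp₀, hp₀s⟩ := aux_path_in_set (hconn 0 (by omega)) ha hb
      obtain ⟨v, q, hq, hqlen, hqs⟩ := ih (fun i => S (i + 1))
        (fun i hi => hconn (i + 1) (by omega))
        (fun i j hi hj hij => hdisj (i + 1) (j + 1) (by omega) (by omega) (by omega))
        (fun i hi => hedge (i + 1) (by omega)) a' ha' hk
      refine ⟨v, p₀.append (Walk.cons hadj q), ?_, ?_, ?_⟩
      · rw [Walk.isPath_def, Walk.support_append, Walk.support_cons, List.tail_cons]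
        refine List.Nodup.append hp₀.support_nodup hq.support_nodup ?_
        intro x hx hx'
        obtain ⟨i, hi, hxi⟩ := hqs x hx'
        exact Set.disjoint_left.mp
          (hdisj 0 (i + 1) (by omega) (by omega) (by omega)) (hp₀s x hx) hxi
      · rw [Walk.length_append, Walk.length_cons]
        omega
      · intro x hx
        rw [Walk.mem_support_append_iff] at hx
        rcases hx with hx | hx
        · exact ⟨0, by omega, hp₀s x hx⟩
        · rw [Walk.support_cons] at hx
          rcases List.mem_cons.mp hx with rfl | hx
          · exact ⟨0, by omega, hb⟩
          · obtain ⟨i, hi, hxi⟩ := hqs x hx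
            exact ⟨i + 1, by omega, hxi⟩

/-- A walk in `starGraph W ⊔ F` avoiding `none` has all its edges in `F`. -/
lemma aux_edges_in_F {W : Type*} {F : SimpleGraph (Option W)} {u v : Option W}
    (p : (_root_.starGraph W ⊔ F).Walk u v) (h : ∀ x ∈ p.support, x ≠ none) :
    ∀ e ∈ p.edges, e ∈ F.edgeSet := by
  intro e
  induction e using Sym2.ind with
  | _ x y =>
    intro he
    have hx := p.fst_mem_support_of_mem_edges he
    have hy := p.snd_mem_support_of_mem_edges he
    have hadj : (_root_.starGraph W ⊔ F).Adj x y := p.edges_subset_edgeSet he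
    rcases (sup_adj _ _ _ _).mp hadj with hs | hf
    · rw [_root_.starGraph, fromRel_adj] at hs
      rcases hs.2 with h1 | h1
      · exact absurd h1 (h x hx)
      · exact absurd h1 (h y hy)
    · exact hf

open Fin.NatCast Fin.CommRing

/-- Adding to a star centered at `none` a forest on the leaves in which every
path has length at most $2(ℓ-1)$ yields a graph whose longest cycle has length
at most $2ℓ$; in particular it has no $C_{2ℓ+1}$-minor. -/
theorem stmt_18 {W : Type*} (ℓ : ℕ) (hℓ : 3 ≤ ℓ) (F : SimpleGraph (Option W))
    (hnone : ∀ w : Option W, ¬ F.Adj none w)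
    (hforest : F.IsAcyclic)
    (hpaths : ∀ (u v : Option W) (p : F.Walk u v), p.IsPath → p.length ≤ 2 * (ℓ - 1)) :
    (∀ (v : Option W) (c : (_root_.starGraph W ⊔ F).Walk v v), c.IsCycle → c.length ≤ 2 * ℓ) ∧
      ¬ (SimpleGraph.cycleGraph (2 * ℓ + 1)).IsMinorOf (_root_.starGraph W ⊔ F) := by
  set G := _root_.starGraph W ⊔ F with hG
  -- bound the length of a path from `none`
  have len_aux : ∀ (x : Option W) (_ : x ≠ none) (w : G.Walk none x),
      w.IsPath → w.length ≤ 2 * (ℓ - 1) + 1 := by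
    intro x hx w hw
    cases w with
    | nil => exact absurd rfl hx
    | cons h' r =>
      rw [Walk.cons_isPath_iff] at hw
      have hF := aux_edges_in_F r (fun y hy heq => hw.2 (heq ▸ hy))
      have hlen := hpaths _ _ (r.transfer F hF) (hw.1.transfer hF)
      rw [Walk.length_transfer] at hlen
      rw [Walk.length_cons]
      omega
  -- bound the length of a cycle through `none`
  have cyc_aux : ∀ (c : G.Walk none none), c.IsCycle → c.length ≤ 2 * ℓ := by
    intro c hc
    cases c with
    | nil => exact absurd rfl hc.ne_nil
    | cons h p =>
      rw [Walk.cons_isCycle_iff] at hc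
      have hx : _ ≠ (none : Option W) := h.ne'
      have hb := len_aux _ hx p.reverse hc.1.reverse
      rw [Walk.length_reverse] at hb
      rw [Walk.length_cons]
      omega
  have part1 : ∀ (v : Option W) (c : G.Walk v v), c.IsCycle → c.length ≤ 2 * ℓ := by
    classical
    intro v c hc
    by_cases hmem : (none : Option W) ∈ c.support
    · have hlen : (c.rotate (h := hmem)).length = c.length := by
        have := (c.rotate_darts (h := hmem)).perm.length_eq
        rwa [Walk.length_darts, Walk.length_darts] at this
      rw [← hlen]
      exact cyc_aux _ (hc.rotate hmem)
    · have hF := aux_edges_in_F c (fun y hy heq => hmem (heq ▸ hy))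
      exact absurd (hc.transfer hF) (hforest _)
  refine ⟨part1, ?_⟩
  rintro ⟨f, hne, hconn, hdisj, hadj⟩
  have hval : ∀ m : ℕ, m < 2 * ℓ + 1 → ((m : Fin (2 * ℓ + 1)) : ℕ) = m :=
    fun m hm => Fin.val_cast_of_lt hm
  -- pick the (at most one) branch set containing `none`
  obtain ⟨w₀, hw₀⟩ : ∃ w₀ : Fin (2 * ℓ + 1), ∀ w, w ≠ w₀ → none ∉ f w := by
    by_cases hex : ∃ w, none ∈ f w
    · obtain ⟨w, hw⟩ := hex
      exact ⟨w, fun w' hne' hmem => Set.disjoint_left.mp (hdisj hne') hmem hw⟩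
    · exact ⟨⟨0, by omega⟩, fun w' _ hmem => hex ⟨w', hmem⟩⟩
  set S : ℕ → Set (Option W) := fun i => f (w₀ + ((i + 1 : ℕ) : Fin (2 * ℓ + 1))) with hS
  have hne₀ : ∀ i < 2 * ℓ, w₀ + ((i + 1 : ℕ) : Fin (2 * ℓ + 1)) ≠ w₀ := by
    intro i hi heq
    have h0 : ((i + 1 : ℕ) : Fin (2 * ℓ + 1)) = 0 := by
      have := add_eq_left.mp heq
      exact this
    have := congrArg Fin.val h0
    rw [hval (i + 1) (by omega)] at this
    simp at this
  have hSnone : ∀ i < 2 * ℓ, (none : Option W) ∉ S i :=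
    fun i hi => hw₀ _ (hne₀ i hi)
  have hdisj' : ∀ i j, i < 2 * ℓ → j < 2 * ℓ → i ≠ j → Disjoint (S i) (S j) := by
    intro i j hi hj hij
    apply hdisj
    intro heq
    have h2 := add_left_cancel heq
    have := congrArg Fin.val h2
    rw [hval (i + 1) (by omega), hval (j + 1) (by omega)] at this
    omega
  have hedge : ∀ i, i + 1 < 2 * ℓ → ∃ a ∈ S i, ∃ b ∈ S (i + 1), G.Adj a b := by
    intro i hi
    have hcadj : (cycleGraph (2 * ℓ + 1)).Adj (w₀ + ((i + 1 : ℕ) : Fin (2 * ℓ + 1)))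
        (w₀ + ((i + 1 + 1 : ℕ) : Fin (2 * ℓ + 1))) := by
      rw [cycleGraph_adj']
      right
      have h2 : ((i + 1 + 1 : ℕ) : Fin (2 * ℓ + 1)) = ((i + 1 : ℕ) : Fin (2 * ℓ + 1)) + 1 := by
        push_cast
        ring
      rw [h2]
      have h3 : (w₀ + (((i + 1 : ℕ) : Fin (2 * ℓ + 1)) + 1)) -
          (w₀ + ((i + 1 : ℕ) : Fin (2 * ℓ + 1))) = 1 := by
        ring
      rw [h3, Fin.val_one']
      exact Nat.mod_eq_of_lt (by omega)
    obtain ⟨a, haS, b, hbS, hGadj⟩ := hadj hcadj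
    exact ⟨a, haS, b, hbS, hGadj⟩
  obtain ⟨v, p, hp, hplen, hps⟩ := aux_chain_path (2 * ℓ) S
    (fun i _ => hconn _) hdisj' hedge _ (hne (w₀ + ((0 + 1 : ℕ) : Fin (2 * ℓ + 1)))).choose_spec
    (by omega)
  have hF := aux_edges_in_F p (by
    intro y hy heq
    obtain ⟨i, hi, hyi⟩ := hps y hy
    exact hSnone i hi (heq ▸ hyi))
  have := hpaths _ _ (p.transfer F hF) (hp.transfer hF)
  rw [Walk.length_transfer] at this
  omega
end
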